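/- For a (k+1)-cycle σ in S_n and a permutation τ in S_n, the length of a shortest factorization of στ into transpositions equals the sum of the shortest factorization lengths of σ and τ (equivalently, n minus the number of cycles is additive: n − c(στ) = k + (n − c(τ))) if and only if the k+1 points moved by σ all lie in distinct cycles of τ. -/

import Mathlib

open Equiv Equiv.Perm Finset

/-- The number of cycles (including fixed points as 1-cycles) of a permutation of `Fin n`. -/
noncomputable def numCycles {n : ℕ} (σ : Equiv.Perm (Fin n)) : ℕ :=
  σ.cycleType.card + (n - σ.support.card)

namespace StmtAux


variable {n : ℕ}

lemma sc_nat {f : Equiv.Perm (Fin n)} {x y : Fin n} :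
    f.SameCycle x y ↔ ∃ i : ℕ, (f ^ i) x = y := by
  constructor
  · intro h
    obtain ⟨i, _, h⟩ := h.exists_pow_eq'
    exact ⟨i, h⟩
  · rintro ⟨i, rfl⟩
    exact ⟨(i : ℤ), by simp⟩

lemma card_quot {α : Type*} [Finite α] (s t : Setoid α)
    (hst : ∀ x y, s.r x y → t.r x y) (a b : α) (hab : ¬ s.r a b) (hab' : t.r a b)
    (hstruct : ∀ x y, t.r x y → s.r x y ∨ (s.r x a ∧ s.r b y) ∨ (s.r x b ∧ s.r a y)) :
    Nat.card (Quotient s) = Nat.card (Quotient t) + 1 := by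
  classical
  let g : Quotient s → Quotient t :=
    Quotient.lift (fun x => Quotient.mk t x) (fun x y h => Quotient.sound (hst x y h))
  have inj : ∀ z1 z2 : Quotient s, g z1 = g z2 → z1 ≠ Quotient.mk s b →
      z2 ≠ Quotient.mk s b → z1 = z2 := by
    refine fun z1 z2 => Quotient.inductionOn₂ z1 z2 ?_
    intro x y h h1 h2
    have ht : t.r x y := Quotient.exact h
    rcases hstruct x y ht with h' | ⟨h1', h2'⟩ | ⟨h1', h2'⟩
    · exact Quotient.sound h'
    · exact absurd (Quotient.sound (s.iseqv.symm h2')) h2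
    · exact absurd (Quotient.sound h1') h1
  have surj : ∀ w : Quotient t, ∃ z : Quotient s, z ≠ Quotient.mk s b ∧ g z = w := by
    refine fun w => Quotient.inductionOn w ?_
    intro x
    by_cases hxb : s.r x b
    · refine ⟨Quotient.mk s a, fun h => hab (Quotient.exact h), ?_⟩
      exact Quotient.sound (t.iseqv.trans hab' (t.iseqv.symm (hst x b hxb)))
    · exact ⟨Quotient.mk s x, fun h => hxb (Quotient.exact h), rfl⟩
  have e : {z : Quotient s // z ≠ Quotient.mk s b} ≃ Quotient t := by
    refine Equiv.ofBijective (fun z => g z.1) ⟨?_, ?_⟩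
    · rintro ⟨z1, h1⟩ ⟨z2, h2⟩ h
      exact Subtype.ext (inj z1 z2 h h1 h2)
    · intro w
      obtain ⟨z, hz, hgz⟩ := surj w
      exact ⟨⟨z, hz⟩, hgz⟩
  have e2 : Quotient s ≃ Option {z : Quotient s // z ≠ Quotient.mk s b} :=
    (Equiv.optionSubtypeNe (Quotient.mk s b)).symm
  rw [Nat.card_congr e2, Finite.card_option, Nat.card_congr e]




lemma numCycles_eq (σ : Equiv.Perm (Fin n)) :
    numCycles σ = Nat.card (Quotient (Equiv.Perm.SameCycle.setoid σ)) := by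
  classical
  set s := Equiv.Perm.SameCycle.setoid σ with hs
  let f0 : Fin n → {c // c ∈ σ.cycleFactorsFinset} ⊕ {x : Fin n // σ x = x} := fun x =>
    if h : σ x = x then Sum.inr ⟨x, h⟩
    else Sum.inl ⟨σ.cycleOf x,
      Equiv.Perm.cycleOf_mem_cycleFactorsFinset_iff.mpr (Equiv.Perm.mem_support.mpr h)⟩
  have hf0 : ∀ x y, σ.SameCycle x y → f0 x = f0 y := by
    intro x y hxy
    by_cases hx : σ x = x
    · have : x = y := hxy.eq_of_left hx
      subst this; rfl
    · have hy : ¬ σ y = y := fun hy => hx (hxy.apply_eq_self_iff.mpr hy)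
      simp only [f0, dif_neg hx, dif_neg hy]
      exact congrArg _ (Subtype.ext hxy.cycleOf_eq)
  have hinj : ∀ x y, f0 x = f0 y → σ.SameCycle x y := by
    intro x y h
    by_cases hx : σ x = x <;> by_cases hy : σ y = y <;>
      simp only [f0, dif_pos, dif_neg, hx, hy] at h
    · cases h
      exact Equiv.Perm.SameCycle.refl _ _
    · exact absurd h (by simp)
    · exact absurd h (by simp)
    · have hco : σ.cycleOf x = σ.cycleOf y := congrArg Subtype.val (Sum.inl.inj h)
      have hy' : y ∈ (σ.cycleOf y).support :=
        Equiv.Perm.mem_support.mpr (by rw [Equiv.Perm.cycleOf_apply_self]; exact hy)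
      rw [← hco] at hy'
      exact (Equiv.Perm.mem_support_cycleOf_iff.mp hy').1
  have hsurj : ∀ w, ∃ x, f0 x = w := by
    rintro (⟨c, hc⟩ | ⟨x, hx⟩)
    · have hc' := Equiv.Perm.mem_cycleFactorsFinset_iff.mp hc
      have hcard : 2 ≤ c.support.card := hc'.1.two_le_card_support
      obtain ⟨x, hx⟩ := Finset.card_pos.mp (Nat.lt_of_lt_of_le Nat.zero_lt_two hcard)
      have hσx : ¬ σ x = x := by
        rw [← hc'.2 x hx]
        exact Equiv.Perm.mem_support.mp hx
      refine ⟨x, ?_⟩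
      simp only [f0, dif_neg hσx]
      exact congrArg Sum.inl (Subtype.ext (Equiv.Perm.cycle_is_cycleOf hx hc).symm)
    · exact ⟨x, by simp only [f0, dif_pos hx]⟩
  have e : Quotient s ≃ ({c // c ∈ σ.cycleFactorsFinset} ⊕ {x : Fin n // σ x = x}) := by
    refine Equiv.ofBijective (Quotient.lift f0 hf0) ⟨?_, ?_⟩
    · refine fun z1 z2 => Quotient.inductionOn₂ z1 z2 ?_
      intro x y h
      exact Quotient.sound (hinj x y h)
    · intro w
      obtain ⟨x, hx⟩ := hsurj w
      exact ⟨Quotient.mk s x, hx⟩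
  rw [Nat.card_congr e, Nat.card_sum]
  have h1 : Nat.card {c // c ∈ σ.cycleFactorsFinset} = σ.cycleType.card := by
    rw [Nat.card_eq_fintype_card, Fintype.card_coe, Equiv.Perm.cycleType_def,
      Multiset.card_map, Finset.card_def]
  have h2 : Nat.card {x : Fin n // σ x = x} = n - σ.support.card := by
    rw [Nat.card_eq_fintype_card, Fintype.card_subtype]
    have : Finset.filter (fun x => σ x = x) Finset.univ = σ.supportᶜ := by
      ext z
      simp [Equiv.Perm.mem_support]
    rw [this, Finset.card_compl, Fintype.card_fin]
  rw [h1, h2, numCycles]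

variable {τ : Equiv.Perm (Fin n)} {a b : Fin n}

lemma merge_key1 (hab : ¬ τ.SameCycle a b) :
    ∀ i : ℕ, (Equiv.swap a b * τ).SameCycle a ((τ ^ i) a) := by
  intro i
  induction i with
  | zero => exact Equiv.Perm.SameCycle.refl _ _
  | succ j ih =>
    have h1 : (τ ^ (j + 1)) a = τ ((τ ^ j) a) := by rw [pow_succ']; rfl
    by_cases h2 : τ ((τ ^ j) a) = a
    · rw [h1, h2]
    by_cases h3 : τ ((τ ^ j) a) = b
    · exact absurd (sc_nat.mpr ⟨j + 1, by rw [h1, h3]⟩) hab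
    · have h4 : (Equiv.swap a b * τ) ((τ ^ j) a) = (τ ^ (j + 1)) a := by
        rw [Equiv.Perm.mul_apply, Equiv.swap_apply_of_ne_of_ne h2 h3, h1]
      rw [← h4]
      exact Equiv.Perm.sameCycle_apply_right.mpr ih

lemma merge_key2 (hab : ¬ τ.SameCycle a b) : (Equiv.swap a b * τ).SameCycle a b := by
  have h0 : τ.SameCycle a (τ⁻¹ a) :=
    Equiv.Perm.sameCycle_symm_apply_right.mpr (Equiv.Perm.SameCycle.refl _ _)
  obtain ⟨i, hi⟩ := sc_nat.mp h0
  have h1 := merge_key1 hab i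
  rw [hi] at h1
  have h2 : (Equiv.swap a b * τ) (τ⁻¹ a) = b := by
    rw [Equiv.Perm.mul_apply, (show τ (τ⁻¹ a) = a from Equiv.apply_symm_apply τ a), Equiv.swap_apply_left]
  have h3 := Equiv.Perm.sameCycle_apply_right.mpr h1
  rwa [h2] at h3

lemma merge_key3 (hab : ¬ τ.SameCycle a b) :
    ∀ i : ℕ, (Equiv.swap a b * τ).SameCycle a ((τ ^ i) b) := by
  intro i
  induction i with
  | zero => exact merge_key2 hab
  | succ j ih =>
    have h1 : (τ ^ (j + 1)) b = τ ((τ ^ j) b) := by rw [pow_succ']; rfl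
    by_cases h2 : τ ((τ ^ j) b) = a
    · rw [h1, h2]
    by_cases h3 : τ ((τ ^ j) b) = b
    · rw [h1, h3]; exact merge_key2 hab
    · have h4 : (Equiv.swap a b * τ) ((τ ^ j) b) = (τ ^ (j + 1)) b := by
        rw [Equiv.Perm.mul_apply, Equiv.swap_apply_of_ne_of_ne h2 h3, h1]
      rw [← h4]
      exact Equiv.Perm.sameCycle_apply_right.mpr ih

lemma merge_key4 :
    ∀ i : ℕ, τ.SameCycle a (((Equiv.swap a b * τ) ^ i) a) ∨
      τ.SameCycle b (((Equiv.swap a b * τ) ^ i) a) := by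
  intro i
  induction i with
  | zero => exact Or.inl (Equiv.Perm.SameCycle.refl _ _)
  | succ j ih =>
    set z := ((Equiv.swap a b * τ) ^ j) a with hz
    have h1 : ((Equiv.swap a b * τ) ^ (j + 1)) a = (Equiv.swap a b * τ) z := by
      rw [pow_succ']; rfl
    rw [h1, Equiv.Perm.mul_apply]
    by_cases h2 : τ z = a
    · rw [h2, Equiv.swap_apply_left]
      exact Or.inr (Equiv.Perm.SameCycle.refl _ _)
    by_cases h3 : τ z = b
    · rw [h3, Equiv.swap_apply_right]
      exact Or.inl (Equiv.Perm.SameCycle.refl _ _)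
    · rw [Equiv.swap_apply_of_ne_of_ne h2 h3]
      rcases ih with h | h
      · exact Or.inl (Equiv.Perm.sameCycle_apply_right.mpr h)
      · exact Or.inr (Equiv.Perm.sameCycle_apply_right.mpr h)

lemma key5 {x : Fin n} (hxa : ¬ τ.SameCycle x a) (hxb : ¬ τ.SameCycle x b) :
    ∀ y, τ.SameCycle x y ↔ (Equiv.swap a b * τ).SameCycle x y := by
  have hpow : ∀ i : ℕ, ((Equiv.swap a b * τ) ^ i) x = (τ ^ i) x := by
    intro i
    induction i with
    | zero => rfl
    | succ j ih =>
      have h1 : ((Equiv.swap a b * τ) ^ (j + 1)) x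
          = (Equiv.swap a b * τ) (((Equiv.swap a b * τ) ^ j) x) := by rw [pow_succ']; rfl
      have h2 : (τ ^ (j + 1)) x = τ ((τ ^ j) x) := by rw [pow_succ']; rfl
      have ha : τ ((τ ^ j) x) ≠ a := fun h => hxa (sc_nat.mpr ⟨j + 1, by rw [h2, h]⟩)
      have hb : τ ((τ ^ j) x) ≠ b := fun h => hxb (sc_nat.mpr ⟨j + 1, by rw [h2, h]⟩)
      rw [h1, ih, Equiv.Perm.mul_apply, Equiv.swap_apply_of_ne_of_ne ha hb, h2]
  intro y
  constructor
  · intro h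
    obtain ⟨i, hi⟩ := sc_nat.mp h
    exact sc_nat.mpr ⟨i, by rw [hpow i]; exact hi⟩
  · intro h
    obtain ⟨i, hi⟩ := sc_nat.mp h
    exact sc_nat.mpr ⟨i, by rw [← hpow i]; exact hi⟩

lemma merge_struct (hab : ¬ τ.SameCycle a b) : ∀ x y,
    (Equiv.swap a b * τ).SameCycle x y ↔
      (τ.SameCycle x y ∨ (τ.SameCycle x a ∧ τ.SameCycle b y) ∨
        (τ.SameCycle x b ∧ τ.SameCycle a y)) := by
  have k1 : ∀ x, τ.SameCycle a x → (Equiv.swap a b * τ).SameCycle a x := by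
    intro x h
    obtain ⟨i, hi⟩ := sc_nat.mp h
    exact hi ▸ merge_key1 hab i
  have k3 : ∀ x, τ.SameCycle b x → (Equiv.swap a b * τ).SameCycle a x := by
    intro x h
    obtain ⟨i, hi⟩ := sc_nat.mp h
    exact hi ▸ merge_key3 hab i
  have k4 : ∀ x, (Equiv.swap a b * τ).SameCycle a x →
      τ.SameCycle a x ∨ τ.SameCycle b x := by
    intro x h
    obtain ⟨i, hi⟩ := sc_nat.mp h
    exact hi ▸ merge_key4 i
  intro x y
  constructor
  · intro h
    by_cases hax : τ.SameCycle a x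
    · have p2 : (Equiv.swap a b * τ).SameCycle a y := (k1 x hax).trans h
      rcases k4 y p2 with h' | h'
      · exact Or.inl (hax.symm.trans h')
      · exact Or.inr (Or.inl ⟨hax.symm, h'⟩)
    by_cases hbx : τ.SameCycle b x
    · have p2 : (Equiv.swap a b * τ).SameCycle a y := (k3 x hbx).trans h
      rcases k4 y p2 with h' | h'
      · exact Or.inr (Or.inr ⟨hbx.symm, h'⟩)
      · exact Or.inl (hbx.symm.trans h')
    · exact Or.inl ((key5 (fun h' => hax h'.symm) (fun h' => hbx h'.symm) y).mpr h)
  · rintro (h | ⟨h1, h2⟩ | ⟨h1, h2⟩)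
    · by_cases hax : τ.SameCycle a x
      · exact (k1 x hax).symm.trans (k1 y (hax.trans h))
      by_cases hbx : τ.SameCycle b x
      · exact (k3 x hbx).symm.trans (k3 y (hbx.trans h))
      · exact (key5 (fun h' => hax h'.symm) (fun h' => hbx h'.symm) y).mp h
    · exact (k1 x h1.symm).symm.trans (k3 y h2)
    · exact (k3 x h1.symm).symm.trans (k1 y h2)

lemma split_le (hab : τ.SameCycle a b) :
    ∀ x y, (Equiv.swap a b * τ).SameCycle x y → τ.SameCycle x y := by
  have key : ∀ (x : Fin n) (i : ℕ), τ.SameCycle x (((Equiv.swap a b * τ) ^ i) x) := by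
    intro x i
    induction i with
    | zero => exact Equiv.Perm.SameCycle.refl _ _
    | succ j ih =>
      set z := ((Equiv.swap a b * τ) ^ j) x with hz
      have h1 : ((Equiv.swap a b * τ) ^ (j + 1)) x = (Equiv.swap a b * τ) z := by
        rw [pow_succ']; rfl
      rw [h1, Equiv.Perm.mul_apply]
      have hxz : τ.SameCycle x (τ z) := Equiv.Perm.sameCycle_apply_right.mpr ih
      by_cases h2 : τ z = a
      · rw [h2, Equiv.swap_apply_left]
        exact (h2 ▸ hxz).trans hab
      by_cases h3 : τ z = b
      · rw [h3, Equiv.swap_apply_right]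
        exact (h3 ▸ hxz).trans hab.symm
      · rw [Equiv.swap_apply_of_ne_of_ne h2 h3]
        exact hxz
  intro x y h
  obtain ⟨i, hi⟩ := sc_nat.mp h
  exact hi ▸ key x i

lemma split_not (hab : τ.SameCycle a b) (hne : a ≠ b) :
    ¬ (Equiv.swap a b * τ).SameCycle a b := by
  have hex : ∃ m : ℕ, 0 < m ∧ (τ ^ m) a = b := by
    obtain ⟨i, hi⟩ := sc_nat.mp hab
    rcases Nat.eq_zero_or_pos i with rfl | hpos
    · exact absurd hi hne
    · exact ⟨i, hpos, hi⟩
  classical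
  obtain ⟨j, ⟨hjpos, hjb⟩, hjmin⟩ :
      ∃ j, (0 < j ∧ (τ ^ j) a = b) ∧ ∀ m < j, ¬(0 < m ∧ (τ ^ m) a = b) :=
    ⟨Nat.find hex, Nat.find_spec hex, fun m hm => Nat.find_min hex hm⟩
  have claim : ∀ i : ℕ, ∃ l, l < j ∧ ((Equiv.swap a b * τ) ^ i) a = (τ ^ l) a := by
    intro i
    induction i with
    | zero => exact ⟨0, hjpos, rfl⟩
    | succ i ih =>
      obtain ⟨l, hl, hz⟩ := ih
      have h1 : ((Equiv.swap a b * τ) ^ (i + 1)) a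
          = (Equiv.swap a b * τ) ((τ ^ l) a) := by rw [pow_succ', Equiv.Perm.mul_apply, hz]
      have h2 : τ ((τ ^ l) a) = (τ ^ (l + 1)) a := by rw [pow_succ']; rfl
      by_cases hb2 : (τ ^ (l + 1)) a = b
      · refine ⟨0, hjpos, ?_⟩
        rw [h1, Equiv.Perm.mul_apply, h2, hb2, Equiv.swap_apply_right]
        rfl
      by_cases ha2 : (τ ^ (l + 1)) a = a
      · exfalso
        by_cases heq : l + 1 = j
        · rw [heq, hjb] at ha2
          exact hne ha2.symm
        · have hlt : l + 1 < j := lt_of_le_of_ne (Nat.succ_le_of_lt hl) heq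
          have hkey : (τ ^ (j - (l + 1))) a = b := by
            have : (τ ^ (j - (l + 1))) ((τ ^ (l + 1)) a) = (τ ^ j) a := by
              rw [← Equiv.Perm.mul_apply, ← pow_add]
              congr 2
              omega
            rw [ha2] at this
            rw [this, hjb]
          have hpos2 : 0 < j - (l + 1) := by
            rcases Nat.eq_zero_or_pos (j - (l + 1)) with h0 | h0
            · rw [h0] at hkey
              exact absurd hkey hne
            · exact h0
          exact hjmin _ (by omega) ⟨hpos2, hkey⟩
      · refine ⟨l + 1, ?_, ?_⟩
        · by_cases heq : l + 1 = j
          · exact absurd (by rw [heq]; exact hjb) hb2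
          · exact lt_of_le_of_ne (Nat.succ_le_of_lt hl) heq
        · rw [h1, Equiv.Perm.mul_apply, h2, Equiv.swap_apply_of_ne_of_ne ha2 hb2]
  intro hcon
  obtain ⟨i, hi⟩ := sc_nat.mp hcon
  obtain ⟨l, hl, hz⟩ := claim i
  rw [hi] at hz
  have hlpos : 0 < l := by
    rcases Nat.eq_zero_or_pos l with rfl | h
    · exact absurd hz.symm hne
    · exact h
  exact hjmin _ hl ⟨hlpos, hz.symm⟩

lemma split_s4 (hab : τ.SameCycle a b) :
    ∀ i : ℕ, (Equiv.swap a b * τ).SameCycle a ((τ ^ i) a) ∨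
      (Equiv.swap a b * τ).SameCycle b ((τ ^ i) a) := by
  intro i
  induction i with
  | zero => exact Or.inl (Equiv.Perm.SameCycle.refl _ _)
  | succ j ih =>
    set z := (τ ^ j) a with hz
    have h1 : (τ ^ (j + 1)) a = τ z := by rw [pow_succ']; rfl
    by_cases h2 : τ z = a
    · rw [h1, h2]
      exact Or.inl (Equiv.Perm.SameCycle.refl _ _)
    by_cases h3 : τ z = b
    · rw [h1, h3]
      exact Or.inr (Equiv.Perm.SameCycle.refl _ _)
    · have h4 : (Equiv.swap a b * τ) z = τ z := by
        rw [Equiv.Perm.mul_apply, Equiv.swap_apply_of_ne_of_ne h2 h3]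
      rw [h1, ← h4]
      rcases ih with h | h
      · exact Or.inl (Equiv.Perm.sameCycle_apply_right.mpr h)
      · exact Or.inr (Equiv.Perm.sameCycle_apply_right.mpr h)

lemma split_hstruct (hab : τ.SameCycle a b) : ∀ x y, τ.SameCycle x y →
    (Equiv.swap a b * τ).SameCycle x y ∨
      ((Equiv.swap a b * τ).SameCycle x a ∧ (Equiv.swap a b * τ).SameCycle b y) ∨
      ((Equiv.swap a b * τ).SameCycle x b ∧ (Equiv.swap a b * τ).SameCycle a y) := by
  have s4 : ∀ x, τ.SameCycle a x →
      (Equiv.swap a b * τ).SameCycle a x ∨ (Equiv.swap a b * τ).SameCycle b x := by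
    intro x h
    obtain ⟨i, hi⟩ := sc_nat.mp h
    exact hi ▸ split_s4 hab i
  intro x y h
  by_cases hax : τ.SameCycle a x
  · have hay : τ.SameCycle a y := hax.trans h
    rcases s4 x hax with h1 | h1 <;> rcases s4 y hay with h2 | h2
    · exact Or.inl (h1.symm.trans h2)
    · exact Or.inr (Or.inl ⟨h1.symm, h2⟩)
    · exact Or.inr (Or.inr ⟨h1.symm, h2⟩)
    · exact Or.inl (h1.symm.trans h2)
  · have hxa : ¬ τ.SameCycle x a := fun h' => hax h'.symm
    have hxb : ¬ τ.SameCycle x b := fun h' => hax (hab.trans h'.symm)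
    exact Or.inl ((key5 hxa hxb y).mp h)




section swaps
variable {τ : Equiv.Perm (Fin n)} {a b : Fin n}
end swaps

variable {τ : Equiv.Perm (Fin n)} {a b : Fin n}

lemma merge_count (hab : ¬ τ.SameCycle a b) :
    numCycles τ = numCycles (Equiv.swap a b * τ) + 1 := by
  rw [numCycles_eq, numCycles_eq]
  exact card_quot (Equiv.Perm.SameCycle.setoid τ)
    (Equiv.Perm.SameCycle.setoid (Equiv.swap a b * τ))
    (fun x y h => (merge_struct hab x y).mpr (Or.inl h)) a b hab (merge_key2 hab)
    (fun x y h => (merge_struct hab x y).mp h)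

lemma split_count (hab : τ.SameCycle a b) (hne : a ≠ b) :
    numCycles (Equiv.swap a b * τ) = numCycles τ + 1 := by
  rw [numCycles_eq, numCycles_eq]
  exact card_quot (Equiv.Perm.SameCycle.setoid (Equiv.swap a b * τ))
    (Equiv.Perm.SameCycle.setoid τ)
    (split_le hab) a b (split_not hab hne) hab (split_hstruct hab)

lemma swap_count_ge (hne : a ≠ b) :
    numCycles τ ≤ numCycles (Equiv.swap a b * τ) + 1 := by
  by_cases hab : τ.SameCycle a b
  · rw [split_count hab hne]
    omega
  · rw [merge_count hab]




section swaps
variable {τ : Equiv.Perm (Fin n)} {a b : Fin n}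
end swaps

lemma main (k : ℕ) : ∀ σ τ : Equiv.Perm (Fin n), σ.IsCycle → σ.support.card = k + 1 →
    ((∀ u ∈ σ.support, ∀ v ∈ σ.support, u ≠ v → ¬ τ.SameCycle u v) →
      numCycles (σ * τ) + k = numCycles τ ∧
        ∀ x y, (σ * τ).SameCycle x y ↔ (τ.SameCycle x y ∨
          ((∃ c ∈ σ.support, τ.SameCycle c x) ∧ (∃ c ∈ σ.support, τ.SameCycle c y)))) ∧
    (¬ (∀ u ∈ σ.support, ∀ v ∈ σ.support, u ≠ v → ¬ τ.SameCycle u v) →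
      numCycles τ < numCycles (σ * τ) + k) := by
  induction k with
  | zero =>
    intro σ τ hσ hcard
    have := hσ.two_le_card_support
    omega
  | succ m IH =>
    intro σ τ hσ hcard
    cases m with
    | zero =>
      obtain ⟨u, v, huv, rfl⟩ := Equiv.Perm.card_support_eq_two.mp hcard
      have hsupp : (Equiv.swap u v).support = {u, v} := Equiv.Perm.support_swap huv
      have hu : u ∈ (Equiv.swap u v).support := by rw [hsupp]; simp
      have hv : v ∈ (Equiv.swap u v).support := by rw [hsupp]; simp
      constructor
      · intro hc
        have hnuv : ¬ τ.SameCycle u v := hc u hu v hv huv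
        refine ⟨by have := merge_count hnuv; omega, ?_⟩
        intro x y
        rw [merge_struct hnuv x y]
        constructor
        · rintro (h | ⟨h1, h2⟩ | ⟨h1, h2⟩)
          · exact Or.inl h
          · exact Or.inr ⟨⟨u, hu, h1.symm⟩, ⟨v, hv, h2⟩⟩
          · exact Or.inr ⟨⟨v, hv, h1.symm⟩, ⟨u, hu, h2⟩⟩
        · rintro (h | ⟨⟨c1, hc1, h1⟩, ⟨c2, hc2, h2⟩⟩)
          · exact Or.inl h
          · rw [hsupp] at hc1 hc2
            simp only [Finset.mem_insert, Finset.mem_singleton] at hc1 hc2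
            rcases hc1 with rfl | rfl <;> rcases hc2 with rfl | rfl
            · exact Or.inl (h1.symm.trans h2)
            · exact Or.inr (Or.inl ⟨h1.symm, h2⟩)
            · exact Or.inr (Or.inr ⟨h1.symm, h2⟩)
            · exact Or.inl (h1.symm.trans h2)
      · intro hnc
        have huvsc : τ.SameCycle u v := by
          by_contra h
          apply hnc
          intro x hx y hy hxy
          rw [hsupp] at hx hy
          simp only [Finset.mem_insert, Finset.mem_singleton] at hx hy
          rcases hx with rfl | rfl <;> rcases hy with rfl | rfl
          · exact absurd rfl hxy
          · exact h
          · exact fun h' => h h'.symm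
          · exact absurd rfl hxy
        have := split_count huvsc huv
        omega
    | succ m'' =>
      have hne : σ.support.Nonempty := Finset.card_pos.mp (by omega)
      obtain ⟨a, ha⟩ := hne
      have haσ : σ a ≠ a := Equiv.Perm.mem_support.mp ha
      have hffa : σ (σ a) ≠ a := by
        intro h2
        have claim : ∀ i : ℕ, (σ ^ i) a = a ∨ (σ ^ i) a = σ a := by
          intro i
          induction i with
          | zero => exact Or.inl rfl
          | succ j ihj =>
            have h1 : (σ ^ (j + 1)) a = σ ((σ ^ j) a) := by rw [pow_succ']; rfl
            rcases ihj with h | h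
            · rw [h1, h]; exact Or.inr rfl
            · rw [h1, h, h2]; exact Or.inl rfl
        have hsub : σ.support ⊆ {a, σ a} := by
          intro x hx
          obtain ⟨i, hi⟩ := hσ.exists_pow_eq haσ (Equiv.Perm.mem_support.mp hx)
          rcases claim i with h | h <;> rw [← hi, h] <;> simp
        have h3 := Finset.card_le_card hsub
        have h4 := Finset.card_insert_le a ({σ a} : Finset (Fin n))
        simp only [Finset.card_singleton] at h4
        omega
      set σ' : Equiv.Perm (Fin n) := Equiv.swap a (σ a) * σ with hσ'def
      have hσ'c : σ'.IsCycle := hσ.swap_mul haσ hffa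
      have hsupp' : σ'.support = σ.support \ {a} := Equiv.Perm.support_swap_mul_eq σ a hffa
      have hcard' : σ'.support.card = (m'' + 1) + 1 := by
        rw [hsupp', Finset.card_sdiff_of_subset (by simpa using ha)]
        simp only [Finset.card_singleton]
        omega
      have hdecomp : Equiv.swap a (σ a) * σ' = σ := by
        rw [hσ'def, ← mul_assoc, Equiv.swap_mul_self, one_mul]
      have hmul : σ * τ = Equiv.swap a (σ a) * (σ' * τ) := by
        rw [hσ'def, ← mul_assoc, ← mul_assoc, Equiv.swap_mul_self, one_mul]
      have hb' : σ a ∈ σ'.support := by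
        rw [hsupp', Finset.mem_sdiff]
        exact ⟨Equiv.Perm.apply_mem_support.mpr ha, by simpa using haσ⟩
      have hsub' : σ'.support ⊆ σ.support := by rw [hsupp']; exact Finset.sdiff_subset
      have hanot : a ∉ σ'.support := by rw [hsupp']; simp
      have hane : a ≠ σ a := Ne.symm haσ
      obtain ⟨IH1, IH2⟩ := IH σ' τ hσ'c hcard'
      constructor
      · intro hc
        have hc' : ∀ u ∈ σ'.support, ∀ v ∈ σ'.support, u ≠ v → ¬ τ.SameCycle u v :=
          fun x hx y hy hxy => hc x (hsub' hx) y (hsub' hy) hxy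
        obtain ⟨hcount, hstr⟩ := IH1 hc'
        have hBa : ¬ (∃ c ∈ σ'.support, τ.SameCycle c a) := by
          rintro ⟨c, hcs, hca⟩
          exact hc c (hsub' hcs) a ha (by rintro rfl; exact hanot hcs) hca
        have hnab : ¬ (σ' * τ).SameCycle a (σ a) := by
          rw [hstr a (σ a)]
          rintro (h | ⟨h1, _⟩)
          · exact hc a ha (σ a) (hsub' hb') hane h
          · exact hBa h1
        have hmc := merge_count hnab
        refine ⟨by rw [hmul]; omega, ?_⟩
        intro x y
        rw [hmul, merge_struct hnab x y]
        have hSa : ∀ z, (σ' * τ).SameCycle a z ↔ τ.SameCycle a z := by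
          intro z
          rw [hstr a z]
          constructor
          · rintro (h | ⟨h1, _⟩)
            · exact h
            · exact absurd h1 hBa
          · exact fun h => Or.inl h
        have hSb : ∀ z, (σ' * τ).SameCycle (σ a) z ↔ (∃ c ∈ σ'.support, τ.SameCycle c z) := by
          intro z
          rw [hstr (σ a) z]
          constructor
          · rintro (h | ⟨_, h2⟩)
            · exact ⟨σ a, hb', h⟩
            · exact h2
          · exact fun h => Or.inr ⟨⟨σ a, hb', Equiv.Perm.SameCycle.refl _ _⟩, h⟩
        have hBx : ∀ z, (∃ c ∈ σ.support, τ.SameCycle c z) ↔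
            (τ.SameCycle a z ∨ ∃ c ∈ σ'.support, τ.SameCycle c z) := by
          intro z
          constructor
          · rintro ⟨c, hcs, hcz⟩
            by_cases hca : c = a
            · subst hca; exact Or.inl hcz
            · exact Or.inr ⟨c, by rw [hsupp']; simp [hcs, hca], hcz⟩
          · rintro (h | ⟨c, hcs, hcz⟩)
            · exact ⟨a, ha, h⟩
            · exact ⟨c, hsub' hcs, hcz⟩
        have e1 : (σ' * τ).SameCycle x a ↔ τ.SameCycle a x :=
          ⟨fun h => (hSa x).mp h.symm, fun h => ((hSa x).mpr h).symm⟩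
        have e3 : (σ' * τ).SameCycle x (σ a) ↔ (∃ c ∈ σ'.support, τ.SameCycle c x) :=
          ⟨fun h => (hSb x).mp h.symm, fun h => ((hSb x).mpr h).symm⟩
        rw [hstr x y, e1, e3, hSb y, hSa y, hBx x, hBx y]
        have f1 : τ.SameCycle a x → τ.SameCycle a y → τ.SameCycle x y :=
          fun p q => p.symm.trans q
        constructor
        · rintro ((h | ⟨h1, h2⟩) | ⟨h1, h2⟩ | ⟨h1, h2⟩)
          · exact Or.inl h
          · exact Or.inr ⟨Or.inr h1, Or.inr h2⟩
          · exact Or.inr ⟨Or.inl h1, Or.inr h2⟩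
          · exact Or.inr ⟨Or.inr h1, Or.inl h2⟩
        · rintro (h | ⟨h1 | h1, h2 | h2⟩)
          · exact Or.inl (Or.inl h)
          · exact Or.inl (Or.inl (f1 h1 h2))
          · exact Or.inr (Or.inl ⟨h1, h2⟩)
          · exact Or.inr (Or.inr ⟨h1, h2⟩)
          · exact Or.inl (Or.inr ⟨h1, h2⟩)
      · intro hnc
        by_cases hc' : ∀ u ∈ σ'.support, ∀ v ∈ σ'.support, u ≠ v → ¬ τ.SameCycle u v
        · obtain ⟨hcount, hstr⟩ := IH1 hc'
          have hBa : ∃ c ∈ σ'.support, τ.SameCycle c a := by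
            push_neg at hnc
            obtain ⟨u, hu, v, hv, huv, hP⟩ := hnc
            by_cases hua : u = a
            · subst hua
              refine ⟨v, ?_, hP.symm⟩
              rw [hsupp']
              simp only [Finset.mem_sdiff, Finset.mem_singleton]
              exact ⟨hv, fun h => huv h.symm⟩
            by_cases hva : v = a
            · subst hva
              refine ⟨u, ?_, hP⟩
              rw [hsupp']
              simp only [Finset.mem_sdiff, Finset.mem_singleton]
              exact ⟨hu, hua⟩
            · exfalso
              have hu' : u ∈ σ'.support := by
                rw [hsupp']; simp only [Finset.mem_sdiff, Finset.mem_singleton]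
                exact ⟨hu, hua⟩
              have hv' : v ∈ σ'.support := by
                rw [hsupp']; simp only [Finset.mem_sdiff, Finset.mem_singleton]
                exact ⟨hv, hva⟩
              exact hc' u hu' v hv' huv hP
          have hab' : (σ' * τ).SameCycle a (σ a) :=
            (hstr a (σ a)).mpr (Or.inr ⟨hBa, ⟨σ a, hb', Equiv.Perm.SameCycle.refl _ _⟩⟩)
          have hsc := split_count hab' hane
          rw [hmul]
          omega
        · have hlt := IH2 hc'
          have hge : numCycles (σ' * τ) ≤ numCycles (Equiv.swap a (σ a) * (σ' * τ)) + 1 :=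
            swap_count_ge hane
          rw [hmul]
          omega


lemma mcard_le_sum : ∀ s : Multiset ℕ, (∀ x ∈ s, 1 ≤ x) → Multiset.card s ≤ s.sum := by
  intro s
  refine Multiset.induction_on s (by simp) ?_
  intro a t ih h
  simp only [Multiset.card_cons, Multiset.sum_cons]
  have h1 := h a (Multiset.mem_cons_self a t)
  have h2 := ih (fun x hx => h x (Multiset.mem_cons_of_mem hx))
  omega

lemma numCycles_le (ρ : Equiv.Perm (Fin n)) : numCycles ρ ≤ n := by
  have h1 : ρ.cycleType.card ≤ ρ.cycleType.sum :=
    mcard_le_sum _ (fun x hx => le_trans one_le_two (Equiv.Perm.two_le_of_mem_cycleType hx))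
  rw [Equiv.Perm.sum_cycleType] at h1
  have h2 : ρ.support.card ≤ n := by
    have := Finset.card_le_univ ρ.support
    simpa using this
  unfold numCycles
  omega

end StmtAux

/-- For a `(k+1)`-cycle `σ` and any `τ` in `S_n`, the degree `n - c(·)` is additive,
`n - c(στ) = k + (n - c(τ))`, iff the `k+1` points moved by `σ` lie in
pairwise distinct cycles of `τ`. -/
theorem stmt1 (n k : ℕ) (σ τ : Equiv.Perm (Fin n)) (hσ : σ.IsCycle)
    (hcard : σ.support.card = k + 1) :
    n - numCycles (σ * τ) = k + (n - numCycles τ) ↔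
      ∀ a ∈ σ.support, ∀ b ∈ σ.support, a ≠ b → ¬ τ.SameCycle a b := by
  obtain ⟨hmain1, hmain2⟩ := StmtAux.main k σ τ hσ hcard
  have h1 := StmtAux.numCycles_le (σ * τ)
  have h2 := StmtAux.numCycles_le τ
  constructor
  · intro heq
    by_contra hnc
    have := hmain2 hnc
    omega
  · intro hc
    have := (hmain1 hc).1
    omega
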